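/- Assume 1 ≤ minsupp ≤ |𝒯|. The approximate representation RMinMMaxF := MMCRMin ∪ MFCRMax characterizes membership in MCR: for every pattern X ⊆ ℐ, X ∈ MCR if and only if there exist J ∈ MMCRMin with J ⊆ X and Z ∈ MFCRMax with X ⊆ Z. -/

import Mathlib

open Finset

variable {τ ι : Type*} [DecidableEq ι]

/-- Conjunctive support: number of transactions containing the whole pattern. -/
def suppConj (T : Finset τ) (items : τ → Finset ι) (X : Finset ι) : ℕ :=
  (T.filter fun t => X ⊆ items t).card

/-- Disjunctive support: number of transactions containing at least one item of the pattern. -/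
def suppDisj (T : Finset τ) (items : τ → Finset ι) (X : Finset ι) : ℕ :=
  (T.filter fun t => (X ∩ items t).Nonempty).card

/-- The bond measure (division by zero in `ℚ` yields `0`, matching the convention). -/
def bond (T : Finset τ) (items : τ → Finset ι) (X : Finset ι) : ℚ :=
  (suppConj T items X : ℚ) / (suppDisj T items X : ℚ)

/-- Correlated patterns. -/
def MC (T : Finset τ) (items : τ → Finset ι) (I : Finset ι) (minbond : ℚ) :
    Set (Finset ι) :=
  {X | X ⊆ I ∧ minbond ≤ bond T items X}

/-- Rare patterns. -/
def MR (T : Finset τ) (items : τ → Finset ι) (I : Finset ι) (minsupp : ℕ) :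
    Set (Finset ι) :=
  {X | X ⊆ I ∧ suppConj T items X < minsupp}

/-- Correlated rare patterns. -/
def MCR (T : Finset τ) (items : τ → Finset ι) (I : Finset ι) (minsupp : ℕ) (minbond : ℚ) :
    Set (Finset ι) :=
  {X | X ⊆ I ∧ minbond ≤ bond T items X ∧ suppConj T items X < minsupp}

/-- Closed correlated rare patterns. -/
def MFCR (T : Finset τ) (items : τ → Finset ι) (I : Finset ι) (minsupp : ℕ) (minbond : ℚ) :
    Set (Finset ι) :=
  {X | X ∈ MCR T items I minsupp minbond ∧
    ∀ Y : Finset ι, X ⊂ Y → Y ⊆ I → bond T items Y ≠ bond T items X}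

/-- Minimal correlated rare patterns. -/
def MMCR (T : Finset τ) (items : τ → Finset ι) (I : Finset ι) (minsupp : ℕ) (minbond : ℚ) :
    Set (Finset ι) :=
  {X | X ∈ MCR T items I minsupp minbond ∧
    ∀ Y : Finset ι, Y ⊂ X → bond T items Y ≠ bond T items X}

/-- Maximal correlated patterns. -/
def MCMax (T : Finset τ) (items : τ → Finset ι) (I : Finset ι) (minbond : ℚ) :
    Set (Finset ι) :=
  {X | X ∈ MC T items I minbond ∧
    ∀ Y : Finset ι, X ⊂ Y → Y ⊆ I → Y ∉ MC T items I minbond}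

/-- Minimal rare patterns. -/
def MRMin (T : Finset τ) (items : τ → Finset ι) (I : Finset ι) (minsupp : ℕ) :
    Set (Finset ι) :=
  {X | X ∈ MR T items I minsupp ∧ ∀ Y : Finset ι, Y ⊂ X → Y ∉ MR T items I minsupp}

/-- Maximal closed correlated rare patterns. -/
def MFCRMax (T : Finset τ) (items : τ → Finset ι) (I : Finset ι) (minsupp : ℕ) (minbond : ℚ) :
    Set (Finset ι) :=
  MFCR T items I minsupp minbond ∩ MCMax T items I minbond

/-- The minimal elements of `MMCR`. -/
def MMCRMin (T : Finset τ) (items : τ → Finset ι) (I : Finset ι) (minsupp : ℕ) (minbond : ℚ) :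
    Set (Finset ι) :=
  MMCR T items I minsupp minbond ∩ MRMin T items I minsupp


lemma suppConj_anti (T : Finset τ) (items : τ → Finset ι) {X Y : Finset ι} (h : X ⊆ Y) :
    suppConj T items Y ≤ suppConj T items X :=
  Finset.card_le_card (Finset.monotone_filter_right T (fun _t _ ht => h.trans ht))

lemma suppDisj_mono (T : Finset τ) (items : τ → Finset ι) {X Y : Finset ι} (h : X ⊆ Y) :
    suppDisj T items X ≤ suppDisj T items Y :=
  Finset.card_le_card (Finset.monotone_filter_right T
    (fun t _ ht => Finset.Nonempty.mono
      (Finset.inter_subset_inter h (Finset.Subset.refl (items t))) ht))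

lemma suppConj_le_suppDisj (T : Finset τ) (items : τ → Finset ι) {X : Finset ι}
    (hX : X.Nonempty) : suppConj T items X ≤ suppDisj T items X := by
  refine Finset.card_le_card (Finset.monotone_filter_right T (fun t _ ht => ?_))
  obtain ⟨x, hx⟩ := hX
  exact ⟨x, Finset.mem_inter.2 ⟨hx, ht hx⟩⟩

lemma suppConj_empty (T : Finset τ) (items : τ → Finset ι) :
    suppConj T items (∅ : Finset ι) = T.card := by
  simp [suppConj]

lemma bond_pos (T : Finset τ) (items : τ → Finset ι) {X : Finset ι}
    (h : 0 < bond T items X) :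
    0 < suppConj T items X ∧ 0 < suppDisj T items X := by
  constructor
  · rcases Nat.eq_zero_or_pos (suppConj T items X) with h0 | h0
    · exfalso; rw [bond, h0] at h; simp at h
    · exact h0
  · rcases Nat.eq_zero_or_pos (suppDisj T items X) with h0 | h0
    · exfalso; rw [bond, h0] at h; simp at h
    · exact h0

lemma nonempty_of_suppDisj_pos (T : Finset τ) (items : τ → Finset ι) {X : Finset ι}
    (h : 0 < suppDisj T items X) : X.Nonempty := by
  obtain ⟨t, ht⟩ := Finset.card_pos.1 h
  obtain ⟨x, hx⟩ := (Finset.mem_filter.1 ht).2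
  exact ⟨x, (Finset.mem_inter.1 hx).1⟩

lemma bond_anti (T : Finset τ) (items : τ → Finset ι) {X Y : Finset ι}
    (hXY : X ⊆ Y) (hX : X.Nonempty) (hY : 0 < suppConj T items Y) :
    bond T items Y ≤ bond T items X := by
  have hc := suppConj_anti T items hXY
  have hcX : 0 < suppConj T items X := lt_of_lt_of_le hY hc
  have hdX : 0 < suppDisj T items X := lt_of_lt_of_le hcX (suppConj_le_suppDisj T items hX)
  have hd := suppDisj_mono T items hXY
  have hdY : 0 < suppDisj T items Y := lt_of_lt_of_le hdX hd
  rw [bond, bond, div_le_div_iff₀ (by exact_mod_cast hdY : (0:ℚ) < _) (by exact_mod_cast hdX : (0:ℚ) < _)]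
  exact_mod_cast Nat.mul_le_mul hc hd

lemma bond_eq_suppConj_eq (T : Finset τ) (items : τ → Finset ι) {X Y : Finset ι}
    (hXY : X ⊆ Y) (hbX : 0 < bond T items X) (hbY : 0 < bond T items Y)
    (heq : bond T items X = bond T items Y) :
    suppConj T items X = suppConj T items Y := by
  obtain ⟨hcX, hdX⟩ := bond_pos T items hbX
  obtain ⟨hcY, hdY⟩ := bond_pos T items hbY
  rw [bond, bond, div_eq_div_iff (ne_of_gt (by exact_mod_cast hdX : (0:ℚ) < _)) (ne_of_gt (by exact_mod_cast hdY : (0:ℚ) < _))] at heq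
  have heq' : suppConj T items X * suppDisj T items Y
      = suppConj T items Y * suppDisj T items X := by exact_mod_cast heq
  have hc := suppConj_anti T items hXY
  have hd := suppDisj_mono T items hXY
  have h1 : suppConj T items X * suppDisj T items Y
      ≤ suppConj T items Y * suppDisj T items Y := by
    calc suppConj T items X * suppDisj T items Y
        = suppConj T items Y * suppDisj T items X := heq'
      _ ≤ suppConj T items Y * suppDisj T items Y := Nat.mul_le_mul_left _ hd
  have := Nat.le_of_mul_le_mul_right h1 hdY
  omega

theorem stmt13 (T : Finset τ) (items : τ → Finset ι) (I : Finset ι)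
    (hitems : ∀ t ∈ T, items t ⊆ I)
    (minsupp : ℕ) (minbond : ℚ)
    (hs1 : 1 ≤ minsupp) (hs2 : minsupp ≤ T.card)
    (hb0 : 0 < minbond) (hb1 : minbond ≤ 1)
    (X : Finset ι) (hXI : X ⊆ I) :
    X ∈ MCR T items I minsupp minbond ↔
      (∃ J ∈ MMCRMin T items I minsupp minbond, J ⊆ X) ∧
        ∃ Z ∈ MFCRMax T items I minsupp minbond, X ⊆ Z := by

  constructor
  · rintro ⟨_, hbX, hrX⟩
    have hbXpos : 0 < bond T items X := lt_of_lt_of_le hb0 hbX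
    obtain ⟨hcX, hdX⟩ := bond_pos T items hbXpos
    constructor
    · -- minimal rare subset
      obtain ⟨J, hJmin'⟩ := Finset.exists_minimal
        (s := X.powerset.filter fun Y => suppConj T items Y < minsupp)
        ⟨X, by simp [hrX]⟩
      obtain ⟨hJmem, hJmin⟩ := And.intro hJmin'.1
        (fun (x : Finset ι) hx (hlt : x < J) => hlt.not_ge (hJmin'.2 hx hlt.le))
      simp only [Finset.mem_filter, Finset.mem_powerset] at hJmem
      obtain ⟨hJX, hJr⟩ := hJmem
      have hmin : ∀ Y : Finset ι, Y ⊂ J → ¬ suppConj T items Y < minsupp := by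
        intro Y hYJ hYr
        refine hJmin Y ?_ hYJ
        simp only [Finset.mem_filter, Finset.mem_powerset]
        exact ⟨hYJ.subset.trans hJX, hYr⟩
      have hJne : J.Nonempty := by
        rcases J.eq_empty_or_nonempty with rfl | h
        · exfalso; rw [suppConj_empty] at hJr; omega
        · exact h
      have hbJ : minbond ≤ bond T items J :=
        le_trans hbX (bond_anti T items hJX hJne hcX)
      have hbJpos : 0 < bond T items J := lt_of_lt_of_le hb0 hbJ
      refine ⟨J, ⟨⟨⟨hJX.trans hXI, hbJ, hJr⟩, ?_⟩, ⟨hJX.trans hXI, hJr⟩, ?_⟩, hJX⟩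
      · intro Y hYJ heq
        have hbYpos : 0 < bond T items Y := heq ▸ hbJpos
        have := bond_eq_suppConj_eq T items hYJ.subset hbYpos hbJpos heq
        exact hmin Y hYJ (this ▸ hJr)
      · intro Y hYJ hYmem
        exact hmin Y hYJ hYmem.2
    · -- maximal correlated superset
      obtain ⟨Z, hZmax'⟩ := Finset.exists_maximal
        (s := I.powerset.filter fun Y => X ⊆ Y ∧ minbond ≤ bond T items Y)
        ⟨X, by simp [hXI, hbX]⟩
      obtain ⟨hZmem, hZmax⟩ := And.intro hZmax'.1
        (fun (x : Finset ι) hx (hlt : Z < x) => hlt.not_ge (hZmax'.2 hx hlt.le))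
      simp only [Finset.mem_filter, Finset.mem_powerset] at hZmem
      obtain ⟨hZI, hXZ, hbZ⟩ := hZmem
      have hmax : ∀ Y : Finset ι, Z ⊂ Y → Y ⊆ I → ¬ minbond ≤ bond T items Y := by
        intro Y hZY hYI hbY
        refine hZmax Y ?_ hZY
        simp only [Finset.mem_filter, Finset.mem_powerset]
        exact ⟨hYI, hXZ.trans hZY.subset, hbY⟩
      have hrZ : suppConj T items Z < minsupp :=
        lt_of_le_of_lt (suppConj_anti T items hXZ) hrX
      refine ⟨Z, ⟨⟨⟨hZI, hbZ, hrZ⟩, ?_⟩, ⟨hZI, hbZ⟩, ?_⟩, hXZ⟩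
      · intro Y hZY hYI heq
        exact hmax Y hZY hYI (heq ▸ hbZ)
      · intro Y hZY hYI hYmem
        exact hmax Y hZY hYI hYmem.2
  · rintro ⟨⟨J, ⟨⟨⟨_, hbJ, hrJ⟩, _⟩, _⟩, hJX⟩, ⟨Z, ⟨⟨⟨_, hbZ, _⟩, _⟩, _⟩, hXZ⟩⟩
    have hbJpos : 0 < bond T items J := lt_of_lt_of_le hb0 hbJ
    obtain ⟨hcJ, hdJ⟩ := bond_pos T items hbJpos
    have hJne : J.Nonempty := nonempty_of_suppDisj_pos T items hdJ
    have hXne : X.Nonempty := hJne.mono hJX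
    have hbZpos : 0 < bond T items Z := lt_of_lt_of_le hb0 hbZ
    obtain ⟨hcZ, hdZ⟩ := bond_pos T items hbZpos
    refine ⟨hXI, le_trans hbZ (bond_anti T items hXZ hXne hcZ), ?_⟩
    exact lt_of_le_of_lt (suppConj_anti T items hJX) hrJ
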